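/- Let G=(V,E) be a finite simple graph with positive vertex weights w, let {ū_u}_{u∈V} be vectors in a real inner product space, let k > 0 and ε ∈ (0,1] be reals, and suppose μ(V) = k. Let S_1, …, S_T be pairwise disjoint subsets covering V with μ(S_i) ≤ 1 + ε/2 for every i, and let Z = (1/k)·∑_{i=1}^T ν(S_i). Then there exists a set of indices I ⊆ {1,…,T} with |I| ≥ (1−ε)·k such that for every i ∈ I there is a nonempty subset P_i ⊆ S_i with |E(P_i, V∖P_i)| ≤ (3Z/ε)·w(P_i); in particular the sets P_i, i ∈ I, are pairwise disjoint and each has expansion at most 3Z/ε. -/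

import Mathlib

open Finset

/-- The set of edges of `G` with exactly one endpoint in `S`. -/
def cutEdges {V : Type*} [Fintype V] [DecidableEq V] (G : SimpleGraph V) [DecidableRel G.Adj]
    (S : Finset V) : Finset (Sym2 V) :=
  G.edgeFinset.filter (fun e => ∃ u ∈ S, ∃ v, v ∉ S ∧ e = s(u, v))

/-- The expansion `φ_G(S) = |E(S, V∖S)| / w(S)` of a set `S`. -/
noncomputable def expansion {V : Type*} [Fintype V] [DecidableEq V] (G : SimpleGraph V)
    [DecidableRel G.Adj] (w : V → ℝ) (S : Finset V) : ℝ :=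
  ((cutEdges G S).card : ℝ) / ∑ u ∈ S, w u

/-- `ν(S) = ∑_{(u,v)∈E, u∈S, v∉S} ‖ū_u‖² + ∑_{(u,v)∈E, u,v∈S} |‖ū_u‖² − ‖ū_v‖²|`,
each edge counted once. -/
noncomputable def nu {V : Type*} [Fintype V] [DecidableEq V] (G : SimpleGraph V)
    [DecidableRel G.Adj] {F : Type*} [NormedAddCommGroup F] [InnerProductSpace ℝ F]
    (ub : V → F) (S : Finset V) : ℝ :=
  ∑ e ∈ G.edgeFinset,
    Sym2.lift ⟨fun u v =>
      if u ∈ S ∧ v ∈ S then |‖ub u‖ ^ 2 - ‖ub v‖ ^ 2|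
      else if u ∈ S then ‖ub u‖ ^ 2
      else if v ∈ S then ‖ub v‖ ^ 2
      else 0,
      by
        intro u v
        by_cases hu : u ∈ S <;> by_cases hv : v ∈ S <;>
          simp [hu, hv, abs_sub_comm]⟩ e


section Aux

variable {V : Type*} [Fintype V] [DecidableEq V] (G : SimpleGraph V) [DecidableRel G.Adj]

/-- A generalization of `nu` to an arbitrary nonnegative vertex function. -/
noncomputable def nuf (f : V → ℝ) (S : Finset V) : ℝ :=
  ∑ e ∈ G.edgeFinset,
    Sym2.lift ⟨fun u v =>
      if u ∈ S ∧ v ∈ S then |f u - f v|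
      else if u ∈ S then f u
      else if v ∈ S then f v
      else 0,
      by
        intro u v
        by_cases hu : u ∈ S <;> by_cases hv : v ∈ S <;>
          simp [hu, hv, abs_sub_comm]⟩ e

lemma mem_cutEdges {a b : V} (hab : G.Adj a b) (S : Finset V) :
    s(a, b) ∈ cutEdges G S ↔ ((a ∈ S ∧ b ∉ S) ∨ (b ∈ S ∧ a ∉ S)) := by
  have hne : a ≠ b := hab.ne
  constructor
  · intro h
    obtain ⟨-, u, hu, v, hv, he⟩ := Finset.mem_filter.mp h
    rw [Sym2.eq_iff] at he
    rcases he with ⟨rfl, rfl⟩ | ⟨rfl, rfl⟩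
    · exact Or.inl ⟨hu, hv⟩
    · exact Or.inr ⟨hu, hv⟩
  · intro h
    refine Finset.mem_filter.mpr ⟨SimpleGraph.mem_edgeFinset.mpr hab, ?_⟩
    rcases h with ⟨ha, hb⟩ | ⟨hb, ha⟩
    · exact ⟨a, ha, b, hb, rfl⟩
    · exact ⟨b, hb, a, ha, Sym2.eq_swap⟩

lemma nuf_nonneg {f : V → ℝ} (hf : ∀ u, 0 ≤ f u) (S : Finset V) : 0 ≤ nuf G f S := by
  refine Finset.sum_nonneg fun e _ => ?_
  induction e using Sym2.ind with
  | _ a b =>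
    simp only [Sym2.lift_mk]
    split_ifs <;> first | positivity | exact hf a | exact hf b

lemma nuf_eq_of_zero {f : V → ℝ} (hf : ∀ u, 0 ≤ f u) {T S : Finset V} (hTS : T ⊆ S)
    (h0 : ∀ u ∈ S, u ∉ T → f u = 0) : nuf G f T = nuf G f S := by
  refine Finset.sum_congr rfl fun e _ => ?_
  induction e using Sym2.ind with
  | _ a b =>
    simp only [Sym2.lift_mk]
    by_cases haS : a ∈ S <;> by_cases hbS : b ∈ S <;>
      by_cases haT : a ∈ T <;> by_cases hbT : b ∈ T
    · simp [haS, hbS, haT, hbT]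
    · have hb0 : f b = 0 := h0 b hbS hbT
      simp [haS, hbS, haT, hbT, hb0, abs_of_nonneg (hf a)]
    · have ha0 : f a = 0 := h0 a haS haT
      simp [haS, hbS, haT, hbT, ha0, abs_of_nonneg (hf b)]
    · have ha0 : f a = 0 := h0 a haS haT
      have hb0 : f b = 0 := h0 b hbS hbT
      simp [haS, hbS, haT, hbT, ha0, hb0]
    · exact absurd (hTS hbT) hbS
    · simp [haS, hbS, haT, hbT]
    · exact absurd (hTS hbT) hbS
    · have ha0 : f a = 0 := h0 a haS haT
      simp [haS, hbS, haT, hbT, ha0]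
    · exact absurd (hTS haT) haS
    · exact absurd (hTS haT) haS
    · simp [haS, hbS, haT, hbT]
    · have hb0 : f b = 0 := h0 b hbS hbT
      simp [haS, hbS, haT, hbT, hb0]
    · exact absurd (hTS haT) haS
    · exact absurd (hTS haT) haS
    · exact absurd (hTS hbT) hbS
    · simp [haS, hbS, haT, hbT]

lemma nuf_shift {f g : V → ℝ} {m : ℝ} {S : Finset V}
    (hfg : ∀ u ∈ S, f u = g u + m) :
    nuf G f S = nuf G g S + m * ((cutEdges G S).card : ℝ) := by
  have hsub : cutEdges G S ⊆ G.edgeFinset := Finset.filter_subset _ _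
  have hcard : m * ((cutEdges G S).card : ℝ) =
      ∑ e ∈ G.edgeFinset, if e ∈ cutEdges G S then m else 0 := by
    rw [← Finset.sum_filter, Finset.filter_mem_eq_inter,
      Finset.inter_eq_right.mpr hsub, Finset.sum_const]
    simp [mul_comm]
  rw [hcard, nuf, nuf, ← Finset.sum_add_distrib]
  refine Finset.sum_congr rfl fun e he => ?_
  induction e using Sym2.ind with
  | _ a b =>
    have hab : G.Adj a b := by
      rw [← SimpleGraph.mem_edgeSet]; exact SimpleGraph.mem_edgeFinset.mp he
    simp only [Sym2.lift_mk]
    by_cases haS : a ∈ S <;> by_cases hbS : b ∈ S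
    · have hnot : s(a, b) ∉ cutEdges G S := by
        rw [mem_cutEdges G hab S]; simp [haS, hbS]
      rw [if_neg hnot]
      simp [haS, hbS, hfg a haS, hfg b hbS, add_sub_add_right_eq_sub]
    · rw [if_pos ((mem_cutEdges G hab S).mpr (Or.inl ⟨haS, hbS⟩))]
      simp [haS, hbS, hfg a haS]
    · rw [if_pos ((mem_cutEdges G hab S).mpr (Or.inr ⟨hbS, haS⟩))]
      simp [haS, hbS, hfg b hbS]
    · have hnot : s(a, b) ∉ cutEdges G S := by
        rw [mem_cutEdges G hab S]; simp [haS, hbS]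
      rw [if_neg hnot]
      simp [haS, hbS]

lemma key_lemma (w : V → ℝ) (hw : ∀ u, 0 < w u) (S : Finset V) :
    ∀ f : V → ℝ, (∀ u, 0 ≤ f u) → 0 < ∑ u ∈ S, w u * f u →
    ∃ P, P ⊆ S ∧ P.Nonempty ∧
      ((cutEdges G P).card : ℝ) * (∑ u ∈ S, w u * f u) ≤ nuf G f S * ∑ u ∈ P, w u := by
  induction S using Finset.strongInduction with
  | _ S IH =>
    intro f hf hμ
    set S' := S.filter (fun u => 0 < f u) with hS'def
    have hz : ∀ u ∈ S, u ∉ S' → f u = 0 := by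
      intro u hu hnu
      rw [hS'def, Finset.mem_filter] at hnu
      push_neg at hnu
      exact le_antisymm (hnu hu) (hf u)
    have hμ' : ∑ u ∈ S', w u * f u = ∑ u ∈ S, w u * f u :=
      Finset.sum_subset (Finset.filter_subset _ _)
        (fun x hx hnx => by rw [hz x hx hnx, mul_zero])
    by_cases hSS : S' = S
    · -- f is positive everywhere on S
      have hpos : ∀ u ∈ S, 0 < f u := by
        intro u hu
        rw [← hSS] at hu
        exact (Finset.mem_filter.mp hu).2
      have hne : S.Nonempty := by
        rcases Finset.eq_empty_or_nonempty S with h | h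
        · rw [h] at hμ; simp at hμ
        · exact h
      obtain ⟨u0, hu0, hmin⟩ := S.exists_min_image f hne
      set m := f u0 with hmdef
      have hm : 0 < m := hpos u0 hu0
      set g : V → ℝ := fun u => max (f u - m) 0 with hgdef
      have hg : ∀ u, 0 ≤ g u := fun u => le_max_right _ _
      have hgS : ∀ u ∈ S, f u = g u + m := by
        intro u hu
        have : g u = f u - m := max_eq_left (sub_nonneg.mpr (hmin u hu))
        rw [this]; ring
      have hshift := nuf_shift G hgS
      have hA : ∑ u ∈ S, w u * f u = (∑ u ∈ S, w u * g u) + m * ∑ u ∈ S, w u := by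
        rw [Finset.mul_sum, ← Finset.sum_add_distrib]
        exact Finset.sum_congr rfl fun u hu => by rw [hgS u hu]; ring
      have hwS : 0 < ∑ u ∈ S, w u := Finset.sum_pos (fun u _ => hw u) hne
      have hνg : 0 ≤ nuf G g S := nuf_nonneg G hg S
      have hcutS : (0:ℝ) ≤ ((cutEdges G S).card : ℝ) := Nat.cast_nonneg _
      by_cases hμg : 0 < ∑ u ∈ S, w u * g u
      · -- recurse on the support of g
        set S'' := S.filter (fun u => 0 < g u) with hS''def
        have hz'' : ∀ u ∈ S, u ∉ S'' → g u = 0 := by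
          intro u hu hnu
          rw [hS''def, Finset.mem_filter] at hnu
          push_neg at hnu
          exact le_antisymm (hnu hu) (hg u)
        have hu0not : u0 ∉ S'' := by
          rw [hS''def, Finset.mem_filter]
          push_neg
          intro _
          simp [hgdef, hmdef]
        have hssub : S'' ⊂ S :=
          Finset.ssubset_iff_of_subset (Finset.filter_subset _ _) |>.mpr ⟨u0, hu0, hu0not⟩
        have hμ'' : ∑ u ∈ S'', w u * g u = ∑ u ∈ S, w u * g u :=
          Finset.sum_subset (Finset.filter_subset _ _)
            (fun x hx hnx => by rw [hz'' x hx hnx, mul_zero])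
        obtain ⟨P, hPsub, hPne, hkeyP⟩ := IH S'' hssub g hg (by rw [hμ'']; exact hμg)
        have hν'' : nuf G g S'' = nuf G g S :=
          nuf_eq_of_zero G hg (Finset.filter_subset _ _) hz''
        rw [hμ'', hν''] at hkeyP
        have hwP : 0 < ∑ u ∈ P, w u := Finset.sum_pos (fun u _ => hw u) hPne
        have hcutP : (0:ℝ) ≤ ((cutEdges G P).card : ℝ) := Nat.cast_nonneg _
        by_cases hc : ((cutEdges G S).card : ℝ) * (∑ u ∈ S, w u * f u) ≤
            nuf G f S * ∑ u ∈ S, w u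
        · exact ⟨S, subset_rfl, hne, hc⟩
        · refine ⟨P, hPsub.trans (Finset.filter_subset _ _), hPne, ?_⟩
          push_neg at hc
          rw [hA, hshift] at hc ⊢
          have e1 : nuf G g S * (∑ u ∈ S, w u) < ((cutEdges G S).card : ℝ) * (∑ u ∈ S, w u * g u) := by
            nlinarith [hc]
          have e2 : ((cutEdges G P).card : ℝ) * (∑ u ∈ S, w u) <
              ((cutEdges G S).card : ℝ) * (∑ u ∈ P, w u) := by
            nlinarith [mul_le_mul_of_nonneg_right hkeyP hwS.le,
              mul_lt_mul_of_pos_right e1 hwP, hμg]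
          nlinarith [hkeyP, mul_lt_mul_of_pos_left e2 hm]
      · -- g has zero mass: take P = S
        refine ⟨S, subset_rfl, hne, ?_⟩
        push_neg at hμg
        rw [hA, hshift]
        nlinarith [hμg, hνg, hcutS, hwS, hm]
    · -- restrict to the support of f
      have hssub : S' ⊂ S := Finset.ssubset_iff_subset_ne.mpr ⟨Finset.filter_subset _ _, hSS⟩
      obtain ⟨P, hPsub, hPne, hkeyP⟩ := IH S' hssub f hf (by rw [hμ']; exact hμ)
      have hν' : nuf G f S' = nuf G f S :=
        nuf_eq_of_zero G hf (Finset.filter_subset _ _) hz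
      rw [hμ', hν'] at hkeyP
      exact ⟨P, hPsub.trans (Finset.filter_subset _ _), hPne, hkeyP⟩

end Aux

theorem stmt13 {V : Type*} [Fintype V] [DecidableEq V] (G : SimpleGraph V) [DecidableRel G.Adj]
    {F : Type*} [NormedAddCommGroup F] [InnerProductSpace ℝ F]
    (w : V → ℝ) (hw : ∀ u, 0 < w u) (ub : V → F)
    (k ε : ℝ) (hk : 0 < k) (hε : ε ∈ Set.Ioc (0 : ℝ) 1)
    (hμV : ∑ u, w u * ‖ub u‖ ^ 2 = k)
    (T : ℕ) (S : Fin T → Finset V)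
    (hdisj : ∀ i j, i ≠ j → Disjoint (S i) (S j))
    (hcover : Finset.univ.biUnion S = Finset.univ)
    (hμ : ∀ i, ∑ u ∈ S i, w u * ‖ub u‖ ^ 2 ≤ 1 + ε / 2)
    (Z : ℝ) (hZ : Z = (1 / k) * ∑ i, nu G ub (S i)) :
    ∃ (I : Finset (Fin T)) (P : Fin T → Finset V),
      (1 - ε) * k ≤ (I.card : ℝ) ∧
      (∀ i ∈ I, P i ⊆ S i ∧ (P i).Nonempty ∧
        ((cutEdges G (P i)).card : ℝ) ≤ (3 * Z / ε) * ∑ u ∈ P i, w u) ∧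
      (∀ i ∈ I, ∀ j ∈ I, i ≠ j → Disjoint (P i) (P j)) ∧
      (∀ i ∈ I, expansion G w (P i) ≤ 3 * Z / ε) := by
  obtain ⟨hε0, hε1⟩ := hε
  have hk0 : k ≠ 0 := ne_of_gt hk
  set f : V → ℝ := fun u => ‖ub u‖ ^ 2 with hfdef
  have hf : ∀ u, 0 ≤ f u := fun u => by positivity
  set μ : Fin T → ℝ := fun i => ∑ u ∈ S i, w u * f u with hμdef
  have hμ0 : ∀ i, 0 ≤ μ i := fun i =>
    Finset.sum_nonneg fun u _ => mul_nonneg (hw u).le (hf u)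
  have hν0 : ∀ i, 0 ≤ nuf G f (S i) := fun i => nuf_nonneg G hf _
  have hsumμ : ∑ i, μ i = k := by
    have h1 : ∑ x ∈ Finset.univ.biUnion S, w x * f x = ∑ i, ∑ u ∈ S i, w u * f u :=
      Finset.sum_biUnion (fun i _ j _ hij => hdisj i j hij)
    rw [hcover] at h1
    simp only [hμdef]
    rw [← h1]
    exact hμV
  have hnu_eq : ∑ i, nu G ub (S i) = ∑ i, nuf G f (S i) := rfl
  have hZ0 : 0 ≤ Z := by
    rw [hZ, hnu_eq]
    exact mul_nonneg (by positivity) (Finset.sum_nonneg fun i _ => hν0 i)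
  have hsumν : ∑ i, nuf G f (S i) = Z * k := by
    rw [hZ, hnu_eq]
    field_simp
  set c := 3 * Z / ε with hcdef
  have hc0 : 0 ≤ c := div_nonneg (by linarith) hε0.le
  set I : Finset (Fin T) := Finset.univ.filter (fun i => 0 < μ i ∧ nuf G f (S i) ≤ c * μ i)
    with hIdef
  have hbad : ∀ i, i ∉ I → c * μ i ≤ nuf G f (S i) := by
    intro i hi
    rw [hIdef, Finset.mem_filter] at hi
    push_neg at hi
    rcases (hμ0 i).lt_or_eq with h | h
    · exact (hi (Finset.mem_univ i) h).le
    · rw [← h, mul_zero]; exact hν0 i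
  have hXnn : 0 ≤ ∑ i ∈ Iᶜ, μ i := Finset.sum_nonneg fun i _ => hμ0 i
  have hXsum : c * ∑ i ∈ Iᶜ, μ i ≤ Z * k := by
    rw [Finset.mul_sum]
    calc ∑ i ∈ Iᶜ, c * μ i ≤ ∑ i ∈ Iᶜ, nuf G f (S i) :=
          Finset.sum_le_sum fun i hi => hbad i (Finset.mem_compl.mp hi)
    _ ≤ ∑ i, nuf G f (S i) :=
          Finset.sum_le_sum_of_subset_of_nonneg (Finset.subset_univ _) (fun i _ _ => hν0 i)
    _ = Z * k := hsumν
  have hX : ∑ i ∈ Iᶜ, μ i ≤ ε * k / 3 := by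
    rcases hZ0.lt_or_eq with hZpos | hZzero
    · rw [hcdef, div_mul_eq_mul_div, div_le_iff₀ hε0] at hXsum
      nlinarith [hXsum, hZpos]
    · have hsum0 : ∑ i, nuf G f (S i) = 0 := by rw [hsumν, ← hZzero]; ring
      have hνall : ∀ i, nuf G f (S i) = 0 := fun i =>
        (Finset.sum_eq_zero_iff_of_nonneg (fun j _ => hν0 j)).mp hsum0 i (Finset.mem_univ i)
      have hzero : ∀ i ∈ Iᶜ, μ i = 0 := by
        intro i hi
        rcases (hμ0 i).lt_or_eq with h | h
        · exfalso
          apply Finset.mem_compl.mp hi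
          rw [hIdef, Finset.mem_filter]
          exact ⟨Finset.mem_univ i, h, by rw [hνall i]; positivity⟩
        · exact h.symm
      rw [Finset.sum_eq_zero hzero]
      positivity
  have hsplit : ∑ i ∈ I, μ i + ∑ i ∈ Iᶜ, μ i = k := by
    rw [Finset.sum_add_sum_compl]; exact hsumμ
  have hIsum : k * (1 - ε / 3) ≤ ∑ i ∈ I, μ i := by nlinarith [hX, hsplit]
  have hIub : ∑ i ∈ I, μ i ≤ (I.card : ℝ) * (1 + ε / 2) := by
    calc ∑ i ∈ I, μ i ≤ ∑ _i ∈ I, (1 + ε / 2) := Finset.sum_le_sum fun i _ => hμ i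
    _ = (I.card : ℝ) * (1 + ε / 2) := by rw [Finset.sum_const, nsmul_eq_mul]
  have hcard : (1 - ε) * k ≤ (I.card : ℝ) := by nlinarith [hIsum, hIub, hε0, hε1, hk]
  have hgood : ∀ i : Fin T, ∃ Q : Finset V, i ∈ I →
      Q ⊆ S i ∧ Q.Nonempty ∧ ((cutEdges G Q).card : ℝ) ≤ c * ∑ u ∈ Q, w u := by
    intro i
    by_cases hi : i ∈ I
    · rw [hIdef, Finset.mem_filter] at hi
      obtain ⟨-, hμi, hνi⟩ := hi
      obtain ⟨P, hPsub, hPne, hkeyP⟩ := key_lemma G w hw (S i) f hf hμi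
      refine ⟨P, fun _ => ⟨hPsub, hPne, ?_⟩⟩
      have hwP : 0 < ∑ u ∈ P, w u := Finset.sum_pos (fun u _ => hw u) hPne
      have h2 : ((cutEdges G P).card : ℝ) * μ i ≤ (c * μ i) * ∑ u ∈ P, w u :=
        le_trans hkeyP (mul_le_mul_of_nonneg_right hνi hwP.le)
      nlinarith [h2, hμi]
    · exact ⟨∅, fun h => absurd h hi⟩
  choose P hP using hgood
  refine ⟨I, P, hcard, fun i hi => hP i hi, ?_, ?_⟩
  · intro i hi j hj hij
    exact (hdisj i j hij).mono (hP i hi).1 (hP j hj).1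
  · intro i hi
    obtain ⟨hsub, hne, hle⟩ := hP i hi
    have hwP : 0 < ∑ u ∈ P i, w u := Finset.sum_pos (fun u _ => hw u) hne
    rw [expansion, div_le_iff₀ hwP]
    exact hle
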